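/- Let S_{V,1,2} be the linear span of S_V, φ₁ and φ₂ in ℂ² ⊗ ℂ² ⊗ ℂ². Then S_{V,1,2} contains infinitely many distinct one-dimensional subspaces spanned by product vectors; explicitly, for every β ∈ ℂ with β ≠ 0 and β ≠ 1, the product vector (|0⟩ + |1⟩) ⊗ ((β − 1)|0⟩ + |1⟩) ⊗ |0⟩ lies in S_{V,1,2}. In particular, S_{V,1,2} is not a quasi-completely entangled subspace. -/

import Mathlib

noncomputable section

abbrev Q : Type := EuclideanSpace ℂ (Fin 2)
abbrev Q2 : Type := EuclideanSpace ℂ (Fin 2 × Fin 2)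
abbrev Q3 : Type := EuclideanSpace ℂ (Fin 2 × Fin 2 × Fin 2)

/-- standard basis vector of ℂ² -/
def ket2 (i : Fin 2) : Q := EuclideanSpace.single i 1

/-- the state |+⟩ -/
def plus : Q := (Real.sqrt 2 : ℂ)⁻¹ • (ket2 0 + ket2 1)

/-- the state |−⟩ -/
def minus : Q := (Real.sqrt 2 : ℂ)⁻¹ • (ket2 0 - ket2 1)

/-- elementary tensor of three qubit vectors, in ℂ² ⊗ ℂ² ⊗ ℂ² ≅ ℂ⁸ -/
def tp3 (u v w : Q) : Q3 := WithLp.toLp 2 (fun p : Fin 2 × Fin 2 × Fin 2 => u p.1 * v p.2.1 * w p.2.2)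

/-- a product vector in ℂ² ⊗ ℂ² ⊗ ℂ² -/
def IsProd3 (ξ : Q3) : Prop := ∃ u v w : Q, ξ = tp3 u v w

/-- the set of one-dimensional subspaces of `T` spanned by (nonzero) product vectors -/
def prodLines3 (T : Submodule ℂ Q3) : Set (Submodule ℂ Q3) :=
  {L | ∃ ξ : Q3, ξ ≠ 0 ∧ ξ ∈ T ∧ IsProd3 ξ ∧ L = Submodule.span ℂ {ξ}}

/-- a factorized vector across the bipartite cut {1} | {2,3} -/
def cut1 (u : Q) (η : Q2) : Q3 := WithLp.toLp 2 (fun p : Fin 2 × Fin 2 × Fin 2 => u p.1 * η p.2)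

/-- a factorized vector across the bipartite cut {2} | {1,3} -/
def cut2 (u : Q) (η : Q2) : Q3 := WithLp.toLp 2 (fun p : Fin 2 × Fin 2 × Fin 2 => u p.2.1 * η (p.1, p.2.2))

/-- a factorized vector across the bipartite cut {3} | {1,2} -/
def cut3 (u : Q) (η : Q2) : Q3 := WithLp.toLp 2 (fun p : Fin 2 × Fin 2 × Fin 2 => u p.2.2 * η (p.1, p.2.1))

def φ₁ : Q3 := tp3 (ket2 0) (ket2 1) plus
def φ₂ : Q3 := tp3 (ket2 1) plus (ket2 0)
def φ₃ : Q3 := tp3 plus (ket2 0) (ket2 1)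
def φ₄ : Q3 := tp3 minus minus minus

/-- the span of the three-qubit UPB of Bennett et al. -/
def V3 : Submodule ℂ Q3 := Submodule.span ℂ {φ₁, φ₂, φ₃, φ₄}

/-- the orthogonal complement of the span of the three-qubit UPB -/
def SV : Submodule ℂ Q3 := V3ᗮ


/-- the double perturbation of `S_V` by `φ₁` and `φ₂` -/
def SV12 : Submodule ℂ Q3 := SV ⊔ Submodule.span ℂ {φ₁} ⊔ Submodule.span ℂ {φ₂}

/-- the candidate product vector, and its orthogonal residue -/
private def xiv (β : ℂ) : Q3 := tp3 (ket2 0 + ket2 1) ((β - 1) • ket2 0 + ket2 1) (ket2 0)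
private def sv (β : ℂ) : Q3 :=
  xiv β - ((Real.sqrt 2 : ℂ))⁻¹ • φ₁ - (β * ((Real.sqrt 2 : ℂ))⁻¹) • φ₂

private lemma sqrt2_ne : ((Real.sqrt 2 : ℝ) : ℂ) ≠ 0 := by
  norm_num [Complex.ext_iff, Real.sqrt_eq_zero']

private lemma inner_sv₁ (β : ℂ) : (inner ℂ φ₁ (sv β) : ℂ) = 0 := by
  simp only [sv, xiv, PiLp.inner_apply, Fintype.sum_prod_type, Fin.sum_univ_two, φ₁, φ₂, tp3,
    ket2, plus, minus, EuclideanSpace.single_apply, PiLp.toLp_apply, RCLike.inner_apply, PiLp.sub_apply,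
    PiLp.smul_apply, PiLp.add_apply, smul_eq_mul, map_mul, map_inv₀, Complex.conj_ofReal,
    map_sub, map_one, map_add]
  have h2 := sqrt2_ne
  have hsq : Real.sqrt 2 ^ 2 = 2 := Real.sq_sqrt (by norm_num)
  have h4 : Real.sqrt 2 ^ 4 = 4 := by
    calc Real.sqrt 2 ^ 4 = (Real.sqrt 2 ^ 2) ^ 2 := by ring
    _ = _ := by rw [hsq]; norm_num
  have h6 : Real.sqrt 2 ^ 6 = 8 := by
    calc Real.sqrt 2 ^ 6 = (Real.sqrt 2 ^ 2) ^ 3 := by ring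
    _ = _ := by rw [hsq]; norm_num
  have h8 : Real.sqrt 2 ^ 8 = 16 := by
    calc Real.sqrt 2 ^ 8 = (Real.sqrt 2 ^ 2) ^ 4 := by ring
    _ = _ := by rw [hsq]; norm_num
  have h10 : Real.sqrt 2 ^ 10 = 32 := by
    calc Real.sqrt 2 ^ 10 = (Real.sqrt 2 ^ 2) ^ 5 := by ring
    _ = _ := by rw [hsq]; norm_num
  have h12 : Real.sqrt 2 ^ 12 = 64 := by
    calc Real.sqrt 2 ^ 12 = (Real.sqrt 2 ^ 2) ^ 6 := by ring
    _ = _ := by rw [hsq]; norm_num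
  field_simp
  try ring_nf
  all_goals norm_num [Complex.ext_iff, ← Complex.ofReal_pow, hsq, h4, h6, h8, h10, h12]
  all_goals ring_nf
  all_goals norm_num [Complex.ext_iff, ← Complex.ofReal_pow, hsq, h4, h6, h8, h10, h12]

private lemma inner_sv₂ (β : ℂ) : (inner ℂ φ₂ (sv β) : ℂ) = 0 := by
  simp only [sv, xiv, PiLp.inner_apply, Fintype.sum_prod_type, Fin.sum_univ_two, φ₁, φ₂, tp3,
    ket2, plus, minus, EuclideanSpace.single_apply, PiLp.toLp_apply, RCLike.inner_apply, PiLp.sub_apply,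
    PiLp.smul_apply, PiLp.add_apply, smul_eq_mul, map_mul, map_inv₀, Complex.conj_ofReal,
    map_sub, map_one, map_add]
  have h2 := sqrt2_ne
  have hsq : Real.sqrt 2 ^ 2 = 2 := Real.sq_sqrt (by norm_num)
  have h4 : Real.sqrt 2 ^ 4 = 4 := by
    calc Real.sqrt 2 ^ 4 = (Real.sqrt 2 ^ 2) ^ 2 := by ring
    _ = _ := by rw [hsq]; norm_num
  have h6 : Real.sqrt 2 ^ 6 = 8 := by
    calc Real.sqrt 2 ^ 6 = (Real.sqrt 2 ^ 2) ^ 3 := by ring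
    _ = _ := by rw [hsq]; norm_num
  have h8 : Real.sqrt 2 ^ 8 = 16 := by
    calc Real.sqrt 2 ^ 8 = (Real.sqrt 2 ^ 2) ^ 4 := by ring
    _ = _ := by rw [hsq]; norm_num
  have h10 : Real.sqrt 2 ^ 10 = 32 := by
    calc Real.sqrt 2 ^ 10 = (Real.sqrt 2 ^ 2) ^ 5 := by ring
    _ = _ := by rw [hsq]; norm_num
  have h12 : Real.sqrt 2 ^ 12 = 64 := by
    calc Real.sqrt 2 ^ 12 = (Real.sqrt 2 ^ 2) ^ 6 := by ring
    _ = _ := by rw [hsq]; norm_num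
  field_simp
  try ring_nf
  all_goals norm_num [Complex.ext_iff, ← Complex.ofReal_pow, hsq, h4, h6, h8, h10, h12]
  all_goals ring_nf
  all_goals norm_num [Complex.ext_iff, ← Complex.ofReal_pow, hsq, h4, h6, h8, h10, h12]

private lemma inner_sv₃ (β : ℂ) : (inner ℂ φ₃ (sv β) : ℂ) = 0 := by
  simp only [sv, xiv, PiLp.inner_apply, Fintype.sum_prod_type, Fin.sum_univ_two, φ₁, φ₂, φ₃, tp3,
    ket2, plus, minus, EuclideanSpace.single_apply, PiLp.toLp_apply, RCLike.inner_apply, PiLp.sub_apply,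
    PiLp.smul_apply, PiLp.add_apply, smul_eq_mul, map_mul, map_inv₀, Complex.conj_ofReal,
    map_sub, map_one, map_add]
  have h2 := sqrt2_ne
  have hsq : Real.sqrt 2 ^ 2 = 2 := Real.sq_sqrt (by norm_num)
  have h4 : Real.sqrt 2 ^ 4 = 4 := by
    calc Real.sqrt 2 ^ 4 = (Real.sqrt 2 ^ 2) ^ 2 := by ring
    _ = _ := by rw [hsq]; norm_num
  have h6 : Real.sqrt 2 ^ 6 = 8 := by
    calc Real.sqrt 2 ^ 6 = (Real.sqrt 2 ^ 2) ^ 3 := by ring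
    _ = _ := by rw [hsq]; norm_num
  have h8 : Real.sqrt 2 ^ 8 = 16 := by
    calc Real.sqrt 2 ^ 8 = (Real.sqrt 2 ^ 2) ^ 4 := by ring
    _ = _ := by rw [hsq]; norm_num
  have h10 : Real.sqrt 2 ^ 10 = 32 := by
    calc Real.sqrt 2 ^ 10 = (Real.sqrt 2 ^ 2) ^ 5 := by ring
    _ = _ := by rw [hsq]; norm_num
  have h12 : Real.sqrt 2 ^ 12 = 64 := by
    calc Real.sqrt 2 ^ 12 = (Real.sqrt 2 ^ 2) ^ 6 := by ring
    _ = _ := by rw [hsq]; norm_num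
  field_simp
  try ring_nf
  all_goals norm_num [Complex.ext_iff, ← Complex.ofReal_pow, hsq, h4, h6, h8, h10, h12]
  all_goals ring_nf
  all_goals norm_num [Complex.ext_iff, ← Complex.ofReal_pow, hsq, h4, h6, h8, h10, h12]

private lemma inner_sv₄ (β : ℂ) : (inner ℂ φ₄ (sv β) : ℂ) = 0 := by
  simp only [sv, xiv, PiLp.inner_apply, Fintype.sum_prod_type, Fin.sum_univ_two, φ₁, φ₂, φ₄, tp3,
    ket2, plus, minus, EuclideanSpace.single_apply, PiLp.toLp_apply, RCLike.inner_apply, PiLp.sub_apply,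
    PiLp.smul_apply, PiLp.add_apply, smul_eq_mul, map_mul, map_inv₀, Complex.conj_ofReal,
    map_sub, map_one, map_add]
  have h2 := sqrt2_ne
  have hsq : Real.sqrt 2 ^ 2 = 2 := Real.sq_sqrt (by norm_num)
  have h4 : Real.sqrt 2 ^ 4 = 4 := by
    calc Real.sqrt 2 ^ 4 = (Real.sqrt 2 ^ 2) ^ 2 := by ring
    _ = _ := by rw [hsq]; norm_num
  have h6 : Real.sqrt 2 ^ 6 = 8 := by
    calc Real.sqrt 2 ^ 6 = (Real.sqrt 2 ^ 2) ^ 3 := by ring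
    _ = _ := by rw [hsq]; norm_num
  have h8 : Real.sqrt 2 ^ 8 = 16 := by
    calc Real.sqrt 2 ^ 8 = (Real.sqrt 2 ^ 2) ^ 4 := by ring
    _ = _ := by rw [hsq]; norm_num
  have h10 : Real.sqrt 2 ^ 10 = 32 := by
    calc Real.sqrt 2 ^ 10 = (Real.sqrt 2 ^ 2) ^ 5 := by ring
    _ = _ := by rw [hsq]; norm_num
  have h12 : Real.sqrt 2 ^ 12 = 64 := by
    calc Real.sqrt 2 ^ 12 = (Real.sqrt 2 ^ 2) ^ 6 := by ring
    _ = _ := by rw [hsq]; norm_num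
  field_simp
  simp only [if_true, if_false, Fin.isValue, Fin.zero_eq_one_iff, Fin.one_eq_zero_iff, map_one, map_zero, ↓reduceIte]
  try ring_nf
  all_goals norm_num [Complex.ext_iff, ← Complex.ofReal_pow, hsq, h4, h6, h8, h10, h12]
  all_goals ring_nf
  all_goals norm_num [Complex.ext_iff, ← Complex.ofReal_pow, hsq, h4, h6, h8, h10, h12]

private lemma mem_SV_of {x : Q3} (h1 : (inner ℂ φ₁ x : ℂ) = 0) (h2 : (inner ℂ φ₂ x : ℂ) = 0)
    (h3 : (inner ℂ φ₃ x : ℂ) = 0) (h4 : (inner ℂ φ₄ x : ℂ) = 0) : x ∈ SV := by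
  rw [SV, V3, Submodule.mem_orthogonal]
  intro u hu
  induction hu using Submodule.span_induction with
  | mem y hy =>
    simp only [Set.mem_insert_iff, Set.mem_singleton_iff] at hy
    rcases hy with rfl | rfl | rfl | rfl <;> assumption
  | zero => simp
  | add a b _ _ ha hb => rw [inner_add_left, ha, hb, add_zero]
  | smul c a _ ha => rw [inner_smul_left, ha, mul_zero]

private lemma xiv_mem (β : ℂ) : xiv β ∈ SV12 := by
  have hs : sv β ∈ SV := mem_SV_of (inner_sv₁ β) (inner_sv₂ β) (inner_sv₃ β) (inner_sv₄ β)
  have h1 : SV ≤ SV12 := le_trans le_sup_left le_sup_left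
  have h2 : Submodule.span ℂ {φ₁} ≤ SV12 := le_trans le_sup_right le_sup_left
  have h3 : Submodule.span ℂ {φ₂} ≤ SV12 := le_sup_right
  have : sv β + ((Real.sqrt 2 : ℂ))⁻¹ • φ₁ + (β * ((Real.sqrt 2 : ℂ))⁻¹) • φ₂ = xiv β := by
    simp [sv]; abel
  rw [← this]
  exact add_mem (add_mem (h1 hs)
    (h2 (Submodule.smul_mem _ _ (Submodule.mem_span_singleton_self _))))
    (h3 (Submodule.smul_mem _ _ (Submodule.mem_span_singleton_self _)))

private lemma xiv_apply₁ (β : ℂ) : xiv β (0, 1, 0) = 1 := by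
  simp [xiv, tp3, ket2, EuclideanSpace.single_apply, PiLp.toLp_apply]

private lemma xiv_apply₀ (β : ℂ) : xiv β (0, 0, 0) = β - 1 := by
  simp [xiv, tp3, ket2, EuclideanSpace.single_apply, PiLp.toLp_apply]

private lemma xiv_ne (β : ℂ) : xiv β ≠ 0 := by
  intro h
  have := xiv_apply₁ β
  rw [h] at this
  simpa using this


theorem statement16 :
    (∀ β : ℂ, β ≠ 0 → β ≠ 1 →
      tp3 (ket2 0 + ket2 1) ((β - 1) • ket2 0 + ket2 1) (ket2 0) ∈ SV12) ∧
    (prodLines3 SV12).Infinite := by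
  constructor
  · intro β _ _
    exact xiv_mem β
  · apply Set.infinite_of_injOn_mapsTo (s := ({0, 1} : Set ℂ)ᶜ)
      (f := fun β => Submodule.span ℂ {xiv β})
    · intro a ha b hb h
      simp only at h
      have hmem : xiv a ∈ Submodule.span ℂ {xiv b} := by
        rw [← h]; exact Submodule.mem_span_singleton_self _
      rw [Submodule.mem_span_singleton] at hmem
      obtain ⟨c, hc⟩ := hmem
      have e1 : c * xiv b (0, 1, 0) = xiv a (0, 1, 0) := congrArg (fun v : Q3 => v (0, 1, 0)) hc
      have e0 : c * xiv b (0, 0, 0) = xiv a (0, 0, 0) := congrArg (fun v : Q3 => v (0, 0, 0)) hc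
      rw [xiv_apply₁, xiv_apply₁, mul_one] at e1
      rw [xiv_apply₀, xiv_apply₀, e1, one_mul] at e0
      exact (sub_left_inj.mp e0).symm
    · intro β hβ
      exact ⟨xiv β, xiv_ne β, xiv_mem β, ⟨_, _, _, rfl⟩, rfl⟩
    · exact Set.Finite.infinite_compl (by simp)
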